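/- Let k be a field, H a Hopf algebra over k with bijective antipode S, and V a left Yetter-Drinfeld module over H with action (h,v) ↦ h·v and coaction δ(v) = v_{-1} ⊗ v_0. Then the linear map θ_V : V → V, v ↦ S(v_{-1})·v_0, is bijective with inverse v ↦ S^{-2}(v_{-1})·v_0, and for all h ∈ H and v ∈ V one has θ_V(h·v) = S²(h)·θ_V(v) and δ(θ_V(v)) = S²(v_{-1}) ⊗ θ_V(v_0). -/

import Mathlib

open TensorProduct

section

variable (k : Type*) [Field k] (H : Type*) [Ring H] [HopfAlgebra k H]
  (V : Type*) [AddCommGroup V] [Module k V]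

/-- The map `θ_V : V → V`, `v ↦ S(v₍₋₁₎)·v₍₀₎`, of a Yetter–Drinfeld module with
action `a` and coaction `δ`. -/
noncomputable def ydTheta (a : H →ₗ[k] V →ₗ[k] V) (δ : V →ₗ[k] H ⊗[k] V) :
    V →ₗ[k] V :=
  (TensorProduct.lift a) ∘ₗ
    (TensorProduct.map (HopfAlgebra.antipode (R := k)) LinearMap.id) ∘ₗ δ

/-- The map `V → V`, `v ↦ S⁻²(v₍₋₁₎)·v₍₀₎` (here `Sinv` is the inverse of the
antipode). -/
noncomputable def ydThetaInv (Sinv : H →ₗ[k] H)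
    (a : H →ₗ[k] V →ₗ[k] V) (δ : V →ₗ[k] H ⊗[k] V) : V →ₗ[k] V :=
  (TensorProduct.lift a) ∘ₗ (TensorProduct.map (Sinv ∘ₗ Sinv) LinearMap.id) ∘ₗ δ

end

namespace YDProofAux

open Coalgebra HopfAlgebra

set_option maxHeartbeats 1000000
set_option synthInstance.maxHeartbeats 100000

section helpers

variable {k : Type*} [Field k]

/-- Every element of a tensor product is a `Fin`-indexed sum of pure tensors. -/
theorem exists_fin_rep {M N : Type*} [AddCommGroup M] [Module k M] [AddCommGroup N] [Module k N]
    (x : M ⊗[k] N) : ∃ (n : ℕ) (g : Fin n → M) (w : Fin n → N), x = ∑ i, g i ⊗ₜ[k] w i := by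
  induction x with
  | zero => exact ⟨0, ![], ![], by simp⟩
  | tmul m n => exact ⟨1, ![m], ![n], by simp⟩
  | add x y hx hy =>
    obtain ⟨n, g, w, rfl⟩ := hx
    obtain ⟨m, g', w', rfl⟩ := hy
    refine ⟨n + m, Fin.append g g', Fin.append w w', ?_⟩
    rw [Fin.sum_univ_add]
    simp [Fin.append]

theorem exists_fin_rep3 {M N P : Type*} [AddCommGroup M] [Module k M] [AddCommGroup N] [Module k N]
    [AddCommGroup P] [Module k P]
    (x : (M ⊗[k] N) ⊗[k] P) :
    ∃ (n : ℕ) (g₁ : Fin n → M) (g₂ : Fin n → N) (g₃ : Fin n → P),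
      x = ∑ i, (g₁ i ⊗ₜ[k] g₂ i) ⊗ₜ[k] g₃ i := by
  induction x with
  | zero => exact ⟨0, ![], ![], ![], by simp⟩
  | tmul u p =>
    obtain ⟨n, g, w, rfl⟩ := exists_fin_rep (k := k) u
    exact ⟨n, g, w, fun _ => p, by rw [TensorProduct.sum_tmul]⟩
  | add x y hx hy =>
    obtain ⟨n, g₁, g₂, g₃, rfl⟩ := hx
    obtain ⟨m, f₁, f₂, f₃, rfl⟩ := hy
    refine ⟨n + m, Fin.append g₁ f₁, Fin.append g₂ f₂, Fin.append g₃ f₃, ?_⟩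
    rw [Fin.sum_univ_add]
    simp [Fin.append]

end helpers

section conv

variable {k : Type*} [Field k] {H : Type*} [Ring H] [HopfAlgebra k H]

theorem sum_counit_smul_left {x : H} {ι : Type*} (r : Repr k x ι) :
    ∑ i ∈ r.index, counit (R := k) (r.left i) • r.right i = x := by
  have h := congrArg (TensorProduct.lid k H) (Coalgebra.sum_counit_tmul_eq r)
  rw [map_sum] at h
  simp only [TensorProduct.lid_tmul, one_smul] at h
  exact h

theorem sum_counit_smul_right {x : H} {ι : Type*} (r : Repr k x ι) :
    ∑ i ∈ r.index, counit (R := k) (r.right i) • r.left i = x := by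
  have h := congrArg (TensorProduct.rid k H) (Coalgebra.sum_tmul_counit_eq r)
  rw [map_sum] at h
  simp only [TensorProduct.rid_tmul, one_smul] at h
  exact h

variable {B : Type*} [Semiring B] [Algebra k B]

/-- Convolution product on `H →ₗ[k] B`. -/
noncomputable def conv (f g : H →ₗ[k] B) : H →ₗ[k] B :=
  (LinearMap.mul' k B) ∘ₗ (TensorProduct.map f g) ∘ₗ (Coalgebra.comul (R := k))

/-- Convolution unit. -/
noncomputable def convOne : H →ₗ[k] B := (Algebra.linearMap k B) ∘ₗ (Coalgebra.counit (R := k))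

theorem conv_repr (f g : H →ₗ[k] B) {x : H} {ι : Type*} (r : Repr k x ι) :
    conv f g x = ∑ i ∈ r.index, f (r.left i) * g (r.right i) := by
  simp [conv, ← r.eq, map_sum]

theorem conv_one_right (f : H →ₗ[k] B) : conv f convOne = f := by
  ext x
  rw [conv_repr f convOne (ℛ k x)]
  calc ∑ i ∈ (ℛ k x).index, f ((ℛ k x).left i) * convOne ((ℛ k x).right i)
      = ∑ i ∈ (ℛ k x).index, f (counit (R := k) ((ℛ k x).right i) • (ℛ k x).left i) := by
        refine Finset.sum_congr rfl fun i _ => ?_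
        simp [convOne, Algebra.algebraMap_eq_smul_one, Algebra.mul_smul_comm]
    _ = f x := by rw [← map_sum, sum_counit_smul_right]

theorem conv_one_left (f : H →ₗ[k] B) : conv convOne f = f := by
  ext x
  rw [conv_repr convOne f (ℛ k x)]
  calc ∑ i ∈ (ℛ k x).index, convOne ((ℛ k x).left i) * f ((ℛ k x).right i)
      = ∑ i ∈ (ℛ k x).index, f (counit (R := k) ((ℛ k x).left i) • (ℛ k x).right i) := by
        refine Finset.sum_congr rfl fun i _ => ?_
        simp [convOne, Algebra.algebraMap_eq_smul_one, Algebra.smul_mul_assoc]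
    _ = f x := by rw [← map_sum, sum_counit_smul_left]

theorem conv_assoc (f g h : H →ₗ[k] B) : conv (conv f g) h = conv f (conv g h) := by
  ext x
  set r := ℛ k x
  set rl : ∀ i : r.ι, Repr k (r.left i) (H × H) := fun i => ℛ k (r.left i)
  set rr : ∀ i : r.ι, Repr k (r.right i) (H × H) := fun i => ℛ k (r.right i)
  set W : H ⊗[k] (H ⊗[k] H) →ₗ[k] B :=
    (LinearMap.mul' k B) ∘ₗ (LinearMap.mul' k B).lTensor B ∘ₗ
      (TensorProduct.map f (TensorProduct.map g h)) with hW
  have key := congrArg W (Coalgebra.sum_tmul_tmul_eq r rl rr)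
  have hWt : ∀ u v w : H, W (u ⊗ₜ[k] (v ⊗ₜ[k] w)) = f u * (g v * h w) := by
    intro u v w; simp [hW]
  simp only [map_sum, hWt] at key
  calc conv (conv f g) h x
      = ∑ i ∈ r.index, conv f g (r.left i) * h (r.right i) := conv_repr _ _ r
    _ = ∑ i ∈ r.index, ∑ j ∈ (rl i).index,
        f ((rl i).left j) * (g ((rl i).right j) * h (r.right i)) := by
        refine Finset.sum_congr rfl fun i _ => ?_
        rw [conv_repr f g (rl i), Finset.sum_mul]
        exact Finset.sum_congr rfl fun j _ => mul_assoc _ _ _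
    _ = ∑ i ∈ r.index, ∑ j ∈ (rr i).index,
        f (r.left i) * (g ((rr i).left j) * h ((rr i).right j)) := key
    _ = ∑ i ∈ r.index, f (r.left i) * conv g h (r.right i) := by
        refine Finset.sum_congr rfl fun i _ => ?_
        rw [conv_repr g h (rr i), Finset.mul_sum]
    _ = conv f (conv g h) x := (conv_repr _ _ r).symm

end conv

section hopf
variable {k : Type*} [Field k] {H : Type*} [Ring H] [HopfAlgebra k H]

local notation "𝒮" => (antipode (R := k) (A := H))
local notation "Δ" => (Coalgebra.comul (R := k) (A := H))
local notation "ε" => (Coalgebra.counit (R := k) (A := H))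

/-- `x ⊗ y ↦ S y ⊗ S x`. -/
noncomputable def kappaMap : H ⊗[k] H →ₗ[k] H ⊗[k] H :=
  (TensorProduct.comm k H H).toLinearMap ∘ₗ TensorProduct.map 𝒮 𝒮

@[simp] theorem kappaMap_tmul (x y : H) : kappaMap (x ⊗ₜ[k] y) = 𝒮 y ⊗ₜ[k] 𝒮 x := rfl

noncomputable def iLeft : H →ₗ[k] H ⊗[k] H := (TensorProduct.mk k H H).flip 1
noncomputable def iRight : H →ₗ[k] H ⊗[k] H := TensorProduct.mk k H H 1

@[simp] theorem iLeft_apply (x : H) : iLeft (k := k) x = x ⊗ₜ[k] 1 := rfl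
@[simp] theorem iRight_apply (x : H) : iRight (k := k) x = 1 ⊗ₜ[k] x := rfl

theorem conv_iLeft_iRight : conv (iLeft (k := k) (H := H)) iRight = Δ := by
  ext x
  rw [conv_repr _ _ (ℛ k x)]
  simp only [iLeft_apply, iRight_apply, Algebra.TensorProduct.tmul_mul_tmul, one_mul, mul_one]
  exact (ℛ k x).eq

theorem conv_iRightS_iLeftS :
    conv (iRight (k := k) (H := H) ∘ₗ 𝒮) (iLeft ∘ₗ 𝒮) = kappaMap ∘ₗ Δ := by
  ext x
  rw [conv_repr _ _ (ℛ k x)]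
  rw [LinearMap.comp_apply, ← (ℛ k x).eq, map_sum]
  simp [Algebra.TensorProduct.tmul_mul_tmul]

theorem conv_iLeft_iLeftS : conv (iLeft (k := k) (H := H)) (iLeft ∘ₗ 𝒮) = convOne := by
  ext x
  rw [conv_repr _ _ (ℛ k x)]
  simp only [LinearMap.comp_apply, iLeft_apply, Algebra.TensorProduct.tmul_mul_tmul, mul_one]
  rw [← TensorProduct.sum_tmul, HopfAlgebra.sum_mul_antipode_eq_smul (ℛ k x)]
  simp [convOne, Algebra.TensorProduct.one_def, Algebra.algebraMap_eq_smul_one,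
    TensorProduct.smul_tmul']

theorem conv_iRight_iRightS : conv (iRight (k := k) (H := H)) (iRight ∘ₗ 𝒮) = convOne := by
  ext x
  rw [conv_repr _ _ (ℛ k x)]
  simp only [LinearMap.comp_apply, iRight_apply, Algebra.TensorProduct.tmul_mul_tmul, mul_one]
  rw [← TensorProduct.tmul_sum, HopfAlgebra.sum_mul_antipode_eq_smul (ℛ k x)]
  simp [convOne, Algebra.TensorProduct.one_def, Algebra.algebraMap_eq_smul_one,
    TensorProduct.tmul_smul]

theorem conv_comulS_comul : conv ((Δ : H →ₗ[k] H ⊗[k] H) ∘ₗ 𝒮) Δ = convOne := by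
  ext x
  rw [conv_repr _ _ (ℛ k x)]
  have : ∀ i ∈ (ℛ k x).index, (Δ ∘ₗ 𝒮) ((ℛ k x).left i) * Δ ((ℛ k x).right i)
      = Δ (𝒮 ((ℛ k x).left i) * (ℛ k x).right i) := by
    intro i _; simp [Bialgebra.comul_mul]
  rw [Finset.sum_congr rfl this, ← map_sum, HopfAlgebra.sum_antipode_mul_eq_smul (ℛ k x)]
  simp [convOne, Algebra.algebraMap_eq_smul_one]

theorem comul_comp_antipode :
    (Δ : H →ₗ[k] H ⊗[k] H) ∘ₗ 𝒮 = kappaMap ∘ₗ Δ := by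
  have h1 : conv ((Δ : H →ₗ[k] H ⊗[k] H) : H →ₗ[k] H ⊗[k] H) (kappaMap ∘ₗ Δ) = convOne := by
    have h2 : conv (conv (iLeft (k := k) (H := H)) iRight) (iRight ∘ₗ 𝒮) = iLeft := by
      rw [conv_assoc, conv_iRight_iRightS, conv_one_right]
    rw [← conv_iRightS_iLeftS, ← conv_iLeft_iRight, ← conv_assoc, h2, conv_iLeft_iLeftS]
  calc (Δ : H →ₗ[k] H ⊗[k] H) ∘ₗ 𝒮
      = conv ((Δ : H →ₗ[k] H ⊗[k] H) ∘ₗ 𝒮) (conv Δ (kappaMap ∘ₗ Δ)) := by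
        rw [h1, conv_one_right]
    _ = conv (conv ((Δ : H →ₗ[k] H ⊗[k] H) ∘ₗ 𝒮) Δ) (kappaMap ∘ₗ Δ) := (conv_assoc _ _ _).symm
    _ = kappaMap ∘ₗ Δ := by rw [conv_comulS_comul, conv_one_left]

theorem comul_antipode (x : H) :
    Δ (𝒮 x) = kappaMap (Δ x) := by
  have := congrFun (congrArg DFunLike.coe (comul_comp_antipode (k := k) (H := H))) x
  simpa using this

end hopf

section hopf2
variable {k : Type*} [Field k] {H : Type*} [Ring H] [HopfAlgebra k H]

local notation "𝒮" => (antipode (R := k) (A := H))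

/-- Product of two comultiplication representations. -/
noncomputable def reprMul {x y : H} {ι κ : Type*} (r1 : Repr k x ι) (r2 : Repr k y κ) :
    Repr k (x * y) (ι × κ) where
  index := r1.index ×ˢ r2.index
  left := fun p => r1.left p.1 * r2.left p.2
  right := fun p => r1.right p.1 * r2.right p.2
  eq := by
    rw [Finset.sum_product]
    rw [Bialgebra.comul_mul, ← r1.eq, ← r2.eq, Finset.sum_mul_sum]
    simp [Algebra.TensorProduct.tmul_mul_tmul]

/-- `(u ⊗ v) ↦ u * S v`. -/
noncomputable def gAux : H ⊗[k] H →ₗ[k] H :=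
  LinearMap.mul' k H ∘ₗ TensorProduct.map LinearMap.id 𝒮

@[simp] theorem gAux_tmul (u v : H) : gAux (u ⊗ₜ[k] v) = u * 𝒮 v := rfl

theorem gAux_comul (c : H) : gAux (Coalgebra.comul (R := k) c) = counit (R := k) c • (1 : H) := by
  rw [← (ℛ k c).eq, map_sum]
  simp only [gAux_tmul]
  exact HopfAlgebra.sum_mul_antipode_eq_smul (ℛ k c)

/-- `(u ⊗ v) ↦ S u * v`. -/
noncomputable def gAux' : H ⊗[k] H →ₗ[k] H :=
  LinearMap.mul' k H ∘ₗ TensorProduct.map 𝒮 LinearMap.id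

@[simp] theorem gAux'_tmul (u v : H) : gAux' (u ⊗ₜ[k] v) = 𝒮 u * v := rfl

theorem gAux'_comul (c : H) : gAux' (Coalgebra.comul (R := k) c) = counit (R := k) c • (1 : H) := by
  rw [← (ℛ k c).eq, map_sum]
  simp only [gAux'_tmul]
  exact HopfAlgebra.sum_antipode_mul_eq_smul (ℛ k c)

noncomputable def f2Aux : (H ⊗[k] H) ⊗[k] (H ⊗[k] H) →ₗ[k] H :=
  LinearMap.mul' k H ∘ₗ TensorProduct.map LinearMap.id gAux ∘ₗ
    (TensorProduct.comm k H H).toLinearMap.lTensor H ∘ₗ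
    (TensorProduct.assoc k H H H).toLinearMap ∘ₗ
    TensorProduct.map LinearMap.id gAux

@[simp] theorem f2Aux_tmul (a₂ a₃ b₂ b₃ : H) :
    f2Aux ((a₂ ⊗ₜ[k] a₃) ⊗ₜ[k] (b₂ ⊗ₜ[k] b₃)) = a₂ * ((b₂ * 𝒮 b₃) * 𝒮 a₃) := by
  simp [f2Aux]

theorem f2Aux_tmul' (a₂ a₃ : H) (s : H ⊗[k] H) :
    f2Aux ((a₂ ⊗ₜ[k] a₃) ⊗ₜ[k] s) = a₂ * (gAux s * 𝒮 a₃) := by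
  induction s with
  | zero => simp
  | tmul u v => simp [f2Aux]
  | add u v hu hv => rw [TensorProduct.tmul_add, map_add, hu, hv, map_add]; noncomm_ring

theorem f2Aux_comul_comul (c d : H) :
    f2Aux (Coalgebra.comul (R := k) c ⊗ₜ[k] Coalgebra.comul (R := k) d) =
      (counit (R := k) d * counit (R := k) c) • (1 : H) := by
  rw [← (ℛ k c).eq, TensorProduct.sum_tmul, map_sum]
  have : ∀ j ∈ (ℛ k c).index,
      f2Aux (((ℛ k c).left j ⊗ₜ[k] (ℛ k c).right j) ⊗ₜ[k] Coalgebra.comul (R := k) d) =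
        counit (R := k) d • ((ℛ k c).left j * 𝒮 ((ℛ k c).right j)) := by
    intro j _
    rw [f2Aux_tmul', gAux_comul]
    simp [smul_mul_assoc, mul_smul_comm]
  rw [Finset.sum_congr rfl this, ← Finset.smul_sum,
    HopfAlgebra.sum_mul_antipode_eq_smul (ℛ k c), smul_smul]

noncomputable def phiB3 : (H ⊗[k] (H ⊗[k] H)) ⊗[k] (H ⊗[k] (H ⊗[k] H)) →ₗ[k] H :=
  LinearMap.mul' k H ∘ₗ
    TensorProduct.map (𝒮 ∘ₗ LinearMap.mul' k H) f2Aux ∘ₗ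
    (TensorProduct.tensorTensorTensorComm k H (H ⊗[k] H) H (H ⊗[k] H)).toLinearMap

theorem phiB3_tmul' (a₁ b₁ : H) (t s : H ⊗[k] H) :
    phiB3 ((a₁ ⊗ₜ[k] t) ⊗ₜ[k] (b₁ ⊗ₜ[k] s)) = 𝒮 (a₁ * b₁) * f2Aux (t ⊗ₜ[k] s) := by
  simp [phiB3]

/-- pairing `(a₁⊗a₂)⊗(b₁⊗b₂) ↦ S(a₁ b₁) * (a₂ b₂)`. -/
noncomputable def pAux : (H ⊗[k] H) ⊗[k] (H ⊗[k] H) →ₗ[k] H :=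
  LinearMap.mul' k H ∘ₗ
    TensorProduct.map (𝒮 ∘ₗ LinearMap.mul' k H) (LinearMap.mul' k H) ∘ₗ
    (TensorProduct.tensorTensorTensorComm k H H H H).toLinearMap

@[simp] theorem pAux_tmul (a₁ a₂ b₁ b₂ : H) :
    pAux ((a₁ ⊗ₜ[k] a₂) ⊗ₜ[k] (b₁ ⊗ₜ[k] b₂)) = 𝒮 (a₁ * b₁) * (a₂ * b₂) := by
  simp [pAux]

theorem pAux_comul_comul (c d : H) :
    pAux (Coalgebra.comul (R := k) c ⊗ₜ[k] Coalgebra.comul (R := k) d) =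
      (counit (R := k) (c * d)) • (1 : H) := by
  rw [← (ℛ k c).eq, ← (ℛ k d).eq, TensorProduct.sum_tmul, map_sum]
  have : ∀ j ∈ (ℛ k c).index,
      pAux (((ℛ k c).left j ⊗ₜ[k] (ℛ k c).right j) ⊗ₜ[k]
          ∑ q ∈ (ℛ k d).index, (ℛ k d).left q ⊗ₜ[k] (ℛ k d).right q) =
        ∑ q ∈ (ℛ k d).index,
          𝒮 ((reprMul (ℛ k c) (ℛ k d)).left (j, q)) * (reprMul (ℛ k c) (ℛ k d)).right (j, q) := by
    intro j _
    rw [TensorProduct.tmul_sum, map_sum]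
    exact Finset.sum_congr rfl fun q _ => by simp [reprMul]
  rw [Finset.sum_congr rfl this, ← Finset.sum_product']
  exact HopfAlgebra.sum_antipode_mul_eq_smul (reprMul (ℛ k c) (ℛ k d))

theorem phiB3_assoc_tmul' (a₃ b₃ : H) (t s : (H ⊗[k] H)) :
    phiB3 (((TensorProduct.assoc k H H H) (t ⊗ₜ[k] a₃)) ⊗ₜ[k]
        ((TensorProduct.assoc k H H H) (s ⊗ₜ[k] b₃))) =
      pAux (t ⊗ₜ[k] s) * (𝒮 b₃ * 𝒮 a₃) := by
  induction t with
  | zero => simp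
  | tmul u v =>
    induction s with
    | zero => simp
    | tmul p q =>
      rw [TensorProduct.assoc_tmul, TensorProduct.assoc_tmul, phiB3_tmul', f2Aux_tmul, pAux_tmul]
      noncomm_ring
    | add s₁ s₂ h₁ h₂ =>
      rw [TensorProduct.add_tmul, map_add, TensorProduct.tmul_add, map_add, h₁, h₂,
        TensorProduct.tmul_add, map_add, add_mul]
  | add t₁ t₂ h₁ h₂ =>
    rw [TensorProduct.add_tmul, map_add, TensorProduct.add_tmul, map_add, h₁, h₂,
      TensorProduct.add_tmul, map_add, add_mul]

theorem antipode_mul_rev (x y : H) : 𝒮 (x * y) = 𝒮 y * 𝒮 x := by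
  set rx := ℛ k x with hrx
  set ry := ℛ k y with hry
  set Tx := (Coalgebra.comul (R := k) (A := H)).lTensor H (Coalgebra.comul (R := k) x) with hTx
  set Ty := (Coalgebra.comul (R := k) (A := H)).lTensor H (Coalgebra.comul (R := k) y) with hTy
  have hTxE : Tx = ∑ i ∈ rx.index, rx.left i ⊗ₜ[k] Coalgebra.comul (R := k) (rx.right i) := by
    rw [hTx, ← rx.eq, map_sum]
    simp only [LinearMap.lTensor_tmul]
  have hTyE : Ty = ∑ p ∈ ry.index, ry.left p ⊗ₜ[k] Coalgebra.comul (R := k) (ry.right p) := by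
    rw [hTy, ← ry.eq, map_sum]
    simp only [LinearMap.lTensor_tmul]
  have E2 : phiB3 (Tx ⊗ₜ[k] Ty) = 𝒮 (x * y) := by
    calc phiB3 (Tx ⊗ₜ[k] Ty)
        = ∑ i ∈ rx.index, ∑ p ∈ ry.index,
            phiB3 ((rx.left i ⊗ₜ[k] Coalgebra.comul (R := k) (rx.right i)) ⊗ₜ[k]
              (ry.left p ⊗ₜ[k] Coalgebra.comul (R := k) (ry.right p))) := by
          rw [hTxE, hTyE, TensorProduct.sum_tmul, map_sum]
          exact Finset.sum_congr rfl fun i _ => by rw [TensorProduct.tmul_sum, map_sum]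
      _ = ∑ i ∈ rx.index, ∑ p ∈ ry.index,
            (counit (R := k) (ry.right p) * counit (R := k) (rx.right i)) •
              𝒮 (rx.left i * ry.left p) := by
          refine Finset.sum_congr rfl fun i _ => Finset.sum_congr rfl fun p _ => ?_
          rw [phiB3_tmul', f2Aux_comul_comul, mul_smul_comm, mul_one]
      _ = 𝒮 (x * y) := by
          conv_rhs => rw [← sum_counit_smul_right rx, ← sum_counit_smul_right ry,
            Finset.sum_mul_sum, map_sum]
          refine Finset.sum_congr rfl fun i _ => ?_
          rw [map_sum]
          refine Finset.sum_congr rfl fun p _ => ?_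
          rw [smul_mul_smul_comm, map_smul, mul_comm (counit (R := k) (ry.right p))]
  have E1 : phiB3 (Tx ⊗ₜ[k] Ty) = 𝒮 y * 𝒮 x := by
    have hTxA : Tx = (TensorProduct.assoc k H H H)
        ((Coalgebra.comul (R := k) (A := H)).rTensor H (Coalgebra.comul (R := k) x)) :=
      (Coalgebra.coassoc_apply x).symm
    have hTyA : Ty = (TensorProduct.assoc k H H H)
        ((Coalgebra.comul (R := k) (A := H)).rTensor H (Coalgebra.comul (R := k) y)) :=
      (Coalgebra.coassoc_apply y).symm
    have hYx : (Coalgebra.comul (R := k) (A := H)).rTensor H (Coalgebra.comul (R := k) x) =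
        ∑ i ∈ rx.index, Coalgebra.comul (R := k) (rx.left i) ⊗ₜ[k] rx.right i := by
      rw [← rx.eq, map_sum]
      simp only [LinearMap.rTensor_tmul]
    have hYy : (Coalgebra.comul (R := k) (A := H)).rTensor H (Coalgebra.comul (R := k) y) =
        ∑ p ∈ ry.index, Coalgebra.comul (R := k) (ry.left p) ⊗ₜ[k] ry.right p := by
      rw [← ry.eq, map_sum]
      simp only [LinearMap.rTensor_tmul]
    calc phiB3 (Tx ⊗ₜ[k] Ty)
        = ∑ i ∈ rx.index, ∑ p ∈ ry.index,
            phiB3 ((TensorProduct.assoc k H H H)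
                (Coalgebra.comul (R := k) (rx.left i) ⊗ₜ[k] rx.right i) ⊗ₜ[k]
              (TensorProduct.assoc k H H H)
                (Coalgebra.comul (R := k) (ry.left p) ⊗ₜ[k] ry.right p)) := by
          rw [hTxA, hTyA, hYx, hYy, map_sum, map_sum, TensorProduct.sum_tmul, map_sum]
          exact Finset.sum_congr rfl fun i _ => by rw [TensorProduct.tmul_sum, map_sum]
      _ = ∑ i ∈ rx.index, ∑ p ∈ ry.index,
            counit (R := k) (rx.left i * ry.left p) • (𝒮 (ry.right p) * 𝒮 (rx.right i)) := by
          refine Finset.sum_congr rfl fun i _ => Finset.sum_congr rfl fun p _ => ?_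
          rw [phiB3_assoc_tmul', pAux_comul_comul, smul_mul_assoc, one_mul]
      _ = 𝒮 y * 𝒮 x := by
          rw [Finset.sum_comm]
          conv_rhs => rw [← sum_counit_smul_left rx, ← sum_counit_smul_left ry,
            map_sum, map_sum, Finset.sum_mul_sum]
          refine Finset.sum_congr rfl fun p _ => ?_
          refine Finset.sum_congr rfl fun i _ => ?_
          rw [map_smul, map_smul, smul_mul_smul_comm, Bialgebra.counit_mul,
            mul_comm (counit (R := k) (ry.left p))]
  rw [← E2, E1]

end hopf2

section yd

variable {k : Type*} [Field k] {H : Type*} [Ring H] [HopfAlgebra k H]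
  {V : Type*} [AddCommGroup V] [Module k V]

local notation "𝒮" => (antipode (R := k) (A := H))

/-- `((x⊗y)⊗z) ↦ (x⊗g)⊗y`-style shuffle then multiply: `((x⊗y)⊗g) ↦ (x*g)⊗y`. -/
noncomputable def fShuf : (H ⊗[k] H) ⊗[k] H →ₗ[k] H ⊗[k] H :=
  TensorProduct.map (LinearMap.mul' k H) LinearMap.id ∘ₗ
    (TensorProduct.assoc k H H H).symm.toLinearMap ∘ₗ
    (TensorProduct.comm k H H).toLinearMap.lTensor H ∘ₗ
    (TensorProduct.assoc k H H H).toLinearMap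

@[simp] theorem fShuf_tmul (x y g : H) : fShuf ((x ⊗ₜ[k] y) ⊗ₜ[k] g) = (x * g) ⊗ₜ[k] y := by
  simp [fShuf]

/-- The Yetter–Drinfeld structure map:
`((x⊗y)⊗z) ⊗ (g⊗w) ↦ (x*g*S z) ⊗ (a y w)`. -/
noncomputable def xiU (a : H →ₗ[k] V →ₗ[k] V) :
    ((H ⊗[k] H) ⊗[k] H) ⊗[k] (H ⊗[k] V) →ₗ[k] H ⊗[k] V :=
  TensorProduct.map (LinearMap.mul' k H) (TensorProduct.lift a) ∘ₗ
    (TensorProduct.tensorTensorTensorComm k H H H V).toLinearMap ∘ₗ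
    TensorProduct.map fShuf (TensorProduct.map 𝒮 LinearMap.id) ∘ₗ
    (TensorProduct.tensorTensorTensorComm k (H ⊗[k] H) H H V).toLinearMap

@[simp] theorem xiU_tmul (a : H →ₗ[k] V →ₗ[k] V) (x y z g : H) (w : V) :
    xiU a (((x ⊗ₜ[k] y) ⊗ₜ[k] z) ⊗ₜ[k] (g ⊗ₜ[k] w)) = (x * g * 𝒮 z) ⊗ₜ[k] (a y) w := by
  simp [xiU]

/-- `phi4 a w : ((c₁⊗c₂)⊗(d₁⊗d₂)) ↦ (S d₁ * d₂ * S (S c₁)) ⊗ (a (S c₂) w)`. -/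
noncomputable def phi4 (a : H →ₗ[k] V →ₗ[k] V) (w : V) :
    (H ⊗[k] H) ⊗[k] (H ⊗[k] H) →ₗ[k] H ⊗[k] V :=
  TensorProduct.map (LinearMap.mul' k H) LinearMap.id ∘ₗ
    (TensorProduct.assoc k H H V).symm.toLinearMap ∘ₗ
    (TensorProduct.comm k (H ⊗[k] V) H).toLinearMap ∘ₗ
    TensorProduct.map
      (TensorProduct.map (𝒮 ∘ₗ 𝒮) ((a.flip w) ∘ₗ 𝒮)) gAux'

@[simp] theorem phi4_tmul (a : H →ₗ[k] V →ₗ[k] V) (w : V) (c₁ c₂ d₁ d₂ : H) :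
    phi4 a w ((c₁ ⊗ₜ[k] c₂) ⊗ₜ[k] (d₁ ⊗ₜ[k] d₂)) =
      (𝒮 d₁ * d₂ * 𝒮 (𝒮 c₁)) ⊗ₜ[k] (a (𝒮 c₂)) w := by
  simp [phi4, mul_assoc]

theorem phi4_tmul_left (a : H →ₗ[k] V →ₗ[k] V) (w : V) (c₁ c₂ : H) (s : H ⊗[k] H) :
    phi4 a w ((c₁ ⊗ₜ[k] c₂) ⊗ₜ[k] s) = (gAux' s * 𝒮 (𝒮 c₁)) ⊗ₜ[k] (a (𝒮 c₂)) w := by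
  induction s with
  | zero => simp
  | tmul d₁ d₂ => rw [phi4_tmul, gAux'_tmul, mul_assoc]
  | add s₁ s₂ h₁ h₂ =>
    rw [TensorProduct.tmul_add, map_add, h₁, h₂, map_add, add_mul, TensorProduct.add_tmul]

theorem phi4_comul_comul (a : H →ₗ[k] V →ₗ[k] V) (w : V) (c d : H) :
    phi4 a w (Coalgebra.comul (R := k) c ⊗ₜ[k] Coalgebra.comul (R := k) d) =
      counit (R := k) d •
        (TensorProduct.map (𝒮 ∘ₗ 𝒮) ((a.flip w) ∘ₗ 𝒮)) (Coalgebra.comul (R := k) c) := by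
  rw [← (ℛ k c).eq, TensorProduct.sum_tmul, map_sum, map_sum, Finset.smul_sum]
  refine Finset.sum_congr rfl fun m _ => ?_
  rw [phi4_tmul_left, gAux'_comul]
  simp [TensorProduct.smul_tmul', smul_mul_assoc]

end yd

section yd2

variable {k : Type*} [Field k] {H : Type*} [Ring H] [HopfAlgebra k H]
  {V : Type*} [AddCommGroup V] [Module k V]

local notation "𝒮" => (antipode (R := k) (A := H))

variable {a : H →ₗ[k] V →ₗ[k] V} {δ : V →ₗ[k] H ⊗[k] V}

/-- The Yetter–Drinfeld condition in Sweedler-free form. -/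
theorem yd_step1
    (hyd : ∀ (h : H) (v : V) (n : ℕ) (g : Fin n → H) (w : Fin n → V),
      δ v = ∑ i, g i ⊗ₜ[k] w i →
      ∀ (m : ℕ) (h₁ h₂ h₃ : Fin m → H),
        (TensorProduct.map (Coalgebra.comul (R := k)) LinearMap.id)
            (Coalgebra.comul (R := k) h) = ∑ j, (h₁ j ⊗ₜ[k] h₂ j) ⊗ₜ[k] h₃ j →
        δ (a h v) = ∑ j, ∑ i,
          (h₁ j * g i * HopfAlgebra.antipode (R := k) (h₃ j)) ⊗ₜ[k] a (h₂ j) (w i))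
    (h : H) (v : V) :
    δ (a h v) = xiU a
      (((TensorProduct.map (Coalgebra.comul (R := k)) LinearMap.id)
          (Coalgebra.comul (R := k) h)) ⊗ₜ[k] δ v) := by
  obtain ⟨n, g, w, hv⟩ := exists_fin_rep (k := k) (δ v)
  obtain ⟨m, h₁, h₂, h₃, hh⟩ := exists_fin_rep3 (k := k)
    ((TensorProduct.map (Coalgebra.comul (R := k)) LinearMap.id) (Coalgebra.comul (R := k) h))
  rw [hyd h v n g w hv m h₁ h₂ h₃ hh, hh, hv, TensorProduct.sum_tmul, map_sum]
  refine Finset.sum_congr rfl fun j _ => ?_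
  rw [TensorProduct.tmul_sum, map_sum]
  exact Finset.sum_congr rfl fun i _ => by rw [xiU_tmul]

/-- Core computation for the `θ(h·v) = S²(h)·θ(v)` claim. -/
theorem theta_core (ha₁ : ∀ v : V, a 1 v = v)
    (hamul : ∀ (h h' : H) (v : V), a (h * h') v = a h (a h' v))
    (h : H) (u : H ⊗[k] V) :
    TensorProduct.lift a (TensorProduct.map 𝒮 LinearMap.id
        (xiU a (((TensorProduct.map (Coalgebra.comul (R := k)) LinearMap.id)
          (Coalgebra.comul (R := k) h)) ⊗ₜ[k] u))) =
      a (𝒮 (𝒮 h)) (TensorProduct.lift a (TensorProduct.map 𝒮 LinearMap.id u)) := by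
  induction u with
  | zero => simp
  | add u₁ u₂ h₁ h₂ => simp only [TensorProduct.tmul_add, map_add, h₁, h₂]
  | tmul g w =>
    set rh := ℛ k h with hrh
    set rp : (j : rh.ι) → Repr k (rh.left j) (H × H) := fun j => ℛ k (rh.left j) with hrp
    have hexp : (TensorProduct.map (Coalgebra.comul (R := k)) LinearMap.id)
        (Coalgebra.comul (R := k) h) =
        ∑ j ∈ rh.index, ∑ m ∈ (rp j).index,
          ((rp j).left m ⊗ₜ[k] (rp j).right m) ⊗ₜ[k] rh.right j := by
      rw [← rh.eq, map_sum]
      refine Finset.sum_congr rfl fun j _ => ?_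
      rw [TensorProduct.map_tmul, ← (rp j).eq, TensorProduct.sum_tmul]
      simp
    have key : ∀ j ∈ rh.index,
        (∑ m ∈ (rp j).index,
          a (𝒮 ((rp j).left m * g * 𝒮 (rh.right j))) (a ((rp j).right m) w)) =
        counit (R := k) (rh.left j) • a (𝒮 (𝒮 (rh.right j))) (a (𝒮 g) w) := by
      intro j _
      have perm : ∀ m ∈ (rp j).index,
          a (𝒮 ((rp j).left m * g * 𝒮 (rh.right j))) (a ((rp j).right m) w) =
          a (𝒮 (𝒮 (rh.right j))) (a (𝒮 g) (a (𝒮 ((rp j).left m) * (rp j).right m) w)) := by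
        intro m _
        calc a (𝒮 ((rp j).left m * g * 𝒮 (rh.right j))) (a ((rp j).right m) w)
            = a (𝒮 (𝒮 (rh.right j)) * (𝒮 g * 𝒮 ((rp j).left m))) (a ((rp j).right m) w) := by
              rw [antipode_mul_rev, antipode_mul_rev]
          _ = a (𝒮 (𝒮 (rh.right j))) (a (𝒮 g) (a (𝒮 ((rp j).left m)) (a ((rp j).right m) w))) := by
              rw [hamul, hamul]
          _ = a (𝒮 (𝒮 (rh.right j))) (a (𝒮 g) (a (𝒮 ((rp j).left m) * (rp j).right m) w)) := by
              rw [hamul]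
      rw [Finset.sum_congr rfl perm]
      have h2 : ∑ m ∈ (rp j).index, a (𝒮 ((rp j).left m) * (rp j).right m) w =
          counit (R := k) (rh.left j) • w := by
        rw [← LinearMap.sum_apply, ← map_sum, HopfAlgebra.sum_antipode_mul_eq_smul (rp j)]
        rw [map_smul, LinearMap.smul_apply, ha₁]
      rw [← map_sum, ← map_sum, h2, map_smul, map_smul]
    calc TensorProduct.lift a (TensorProduct.map 𝒮 LinearMap.id
          (xiU a (((TensorProduct.map (Coalgebra.comul (R := k)) LinearMap.id)
            (Coalgebra.comul (R := k) h)) ⊗ₜ[k] (g ⊗ₜ[k] w))))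
        = ∑ j ∈ rh.index, ∑ m ∈ (rp j).index,
            a (𝒮 ((rp j).left m * g * 𝒮 (rh.right j))) (a ((rp j).right m) w) := by
          rw [hexp]
          simp only [TensorProduct.sum_tmul, map_sum, xiU_tmul, TensorProduct.map_tmul,
            TensorProduct.lift.tmul, LinearMap.id_coe, id_eq]
      _ = ∑ j ∈ rh.index, counit (R := k) (rh.left j) • a (𝒮 (𝒮 (rh.right j))) (a (𝒮 g) w) :=
          Finset.sum_congr rfl key
      _ = a (𝒮 (𝒮 h)) (TensorProduct.lift a (TensorProduct.map 𝒮 LinearMap.id (g ⊗ₜ[k] w))) := by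
          conv_rhs => rw [← sum_counit_smul_left rh]
          simp only [map_sum, map_smul, LinearMap.sum_apply, LinearMap.smul_apply,
            TensorProduct.map_tmul, TensorProduct.lift.tmul, LinearMap.id_coe, id_eq]

end yd2

section yd3

variable {k : Type*} [Field k] {H : Type*} [Ring H] [HopfAlgebra k H]
  {V : Type*} [AddCommGroup V] [Module k V]

local notation "𝒮" => (antipode (R := k) (A := H))

variable {a : H →ₗ[k] V →ₗ[k] V} {δ : V →ₗ[k] H ⊗[k] V}

theorem lemE (a : H →ₗ[k] V →ₗ[k] V) :
    (xiU a ∘ₗ TensorProduct.map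
        ((TensorProduct.map (Coalgebra.comul (R := k)) LinearMap.id) ∘ₗ Coalgebra.comul (R := k))
        LinearMap.id) ∘ₗ
      TensorProduct.map 𝒮 LinearMap.id ∘ₗ (TensorProduct.assoc k H H V).toLinearMap ∘ₗ
      TensorProduct.map (Coalgebra.comul (R := k)) LinearMap.id =
    TensorProduct.map (𝒮 ∘ₗ 𝒮) (TensorProduct.lift a ∘ₗ TensorProduct.map 𝒮 LinearMap.id) ∘ₗ
      (TensorProduct.assoc k H H V).toLinearMap ∘ₗ
      TensorProduct.map (Coalgebra.comul (R := k)) LinearMap.id := by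
  apply TensorProduct.ext'
  intro g w
  set rg := ℛ k g with hrg
  set rx : (i : rg.ι) → Repr k (rg.left i) (H × H) := fun i => ℛ k (rg.left i) with hrx
  set rxr : (i : rg.ι) → (m : (rx i).ι) → Repr k ((rx i).right m) (H × H) :=
    fun i m => ℛ k ((rx i).right m) with hrxr
  set Fm : H ⊗[k] H →ₗ[k] H ⊗[k] V :=
    TensorProduct.map (𝒮 ∘ₗ 𝒮) ((a.flip w) ∘ₗ 𝒮) with hFm
  -- the canonical reshaping
  have nat1 : (TensorProduct.assoc k (H ⊗[k] H) H H).toLinearMap ∘ₗ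
      (((Coalgebra.comul (R := k) (A := H)).rTensor H).rTensor H) =
      (Coalgebra.comul (R := k) (A := H)).rTensor (H ⊗[k] H) ∘ₗ
        (TensorProduct.assoc k H H H).toLinearMap := by
    apply TensorProduct.ext_threefold
    intro x y z
    simp
  have h1 : ∀ i ∈ rg.index,
      (∑ m ∈ (rx i).index, ∑ n ∈ (rxr i m).index,
        ((rx i).left m ⊗ₜ[k] (rxr i m).left n) ⊗ₜ[k] (rxr i m).right n) =
      (Coalgebra.comul (R := k) (A := H)).rTensor H (Coalgebra.comul (R := k) (rg.left i)) := by
    intro i _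
    rw [← Coalgebra.coassoc_symm_apply (rg.left i), ← (rx i).eq, map_sum, map_sum]
    refine Finset.sum_congr rfl fun m _ => ?_
    rw [LinearMap.lTensor_tmul, ← (rxr i m).eq, TensorProduct.tmul_sum, map_sum]
    exact Finset.sum_congr rfl fun n _ => by rw [TensorProduct.assoc_symm_tmul]
  have SH : (∑ i ∈ rg.index, ∑ m ∈ (rx i).index, ∑ n ∈ (rxr i m).index,
      ((rx i).left m ⊗ₜ[k] (rxr i m).left n) ⊗ₜ[k] ((rxr i m).right n ⊗ₜ[k] rg.right i)) =
      (TensorProduct.map (Coalgebra.comul (R := k)) (Coalgebra.comul (R := k)))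
        (Coalgebra.comul (R := k) g) := by
    calc (∑ i ∈ rg.index, ∑ m ∈ (rx i).index, ∑ n ∈ (rxr i m).index,
        ((rx i).left m ⊗ₜ[k] (rxr i m).left n) ⊗ₜ[k] ((rxr i m).right n ⊗ₜ[k] rg.right i))
        = ∑ i ∈ rg.index, (TensorProduct.assoc k (H ⊗[k] H) H H)
            (((Coalgebra.comul (R := k) (A := H)).rTensor H
              (Coalgebra.comul (R := k) (rg.left i))) ⊗ₜ[k] rg.right i) := by
          refine Finset.sum_congr rfl fun i hi => ?_
          rw [← h1 i hi, TensorProduct.sum_tmul, map_sum]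
          refine Finset.sum_congr rfl fun m _ => ?_
          rw [TensorProduct.sum_tmul, map_sum]
          exact Finset.sum_congr rfl fun n _ => by rw [TensorProduct.assoc_tmul]
      _ = (TensorProduct.assoc k (H ⊗[k] H) H H)
            ((((Coalgebra.comul (R := k) (A := H)).rTensor H ∘ₗ
              Coalgebra.comul (R := k)).rTensor H) (Coalgebra.comul (R := k) g)) := by
          rw [← map_sum]
          congr 1
          rw [← rg.eq, map_sum]
          exact Finset.sum_congr rfl fun i _ => by rw [LinearMap.rTensor_tmul]; rfl
      _ = (Coalgebra.comul (R := k) (A := H)).rTensor (H ⊗[k] H)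
            ((TensorProduct.assoc k H H H)
              (((Coalgebra.comul (R := k) (A := H)).rTensor H)
                (Coalgebra.comul (R := k) g))) := by
          rw [LinearMap.rTensor_comp]
          exact congrFun (congrArg DFunLike.coe nat1)
            (((Coalgebra.comul (R := k) (A := H)).rTensor H) (Coalgebra.comul (R := k) g))
      _ = (Coalgebra.comul (R := k) (A := H)).rTensor (H ⊗[k] H)
            (((Coalgebra.comul (R := k) (A := H)).lTensor H) (Coalgebra.comul (R := k) g)) := by
          rw [Coalgebra.coassoc_apply]
      _ = (TensorProduct.map (Coalgebra.comul (R := k)) (Coalgebra.comul (R := k)))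
            (Coalgebra.comul (R := k) g) := by
          rw [← LinearMap.rTensor_comp_lTensor]
          rfl
  -- left-hand side
  have hc : ∀ i ∈ rg.index,
      (TensorProduct.map (Coalgebra.comul (R := k)) LinearMap.id)
        (Coalgebra.comul (R := k) (𝒮 (rg.left i))) =
      ∑ m ∈ (rx i).index, ∑ n ∈ (rxr i m).index,
        (𝒮 ((rxr i m).right n) ⊗ₜ[k] 𝒮 ((rxr i m).left n)) ⊗ₜ[k] 𝒮 ((rx i).left m) := by
    intro i _
    rw [comul_antipode, ← (rx i).eq, map_sum, map_sum]
    refine Finset.sum_congr rfl fun m _ => ?_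
    rw [kappaMap_tmul, TensorProduct.map_tmul, comul_antipode, ← (rxr i m).eq, map_sum,
      TensorProduct.sum_tmul]
    exact Finset.sum_congr rfl fun n _ => by rw [kappaMap_tmul]; rfl
  have hLHS : ((xiU a ∘ₗ TensorProduct.map
        ((TensorProduct.map (Coalgebra.comul (R := k)) LinearMap.id) ∘ₗ Coalgebra.comul (R := k))
        LinearMap.id) ∘ₗ
      TensorProduct.map 𝒮 LinearMap.id ∘ₗ (TensorProduct.assoc k H H V).toLinearMap ∘ₗ
      TensorProduct.map (Coalgebra.comul (R := k)) LinearMap.id) (g ⊗ₜ[k] w) =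
      phi4 a w ((TensorProduct.map (Coalgebra.comul (R := k)) (Coalgebra.comul (R := k)))
        (Coalgebra.comul (R := k) g)) := by
    rw [← SH]
    simp only [LinearMap.comp_apply, TensorProduct.map_tmul, LinearMap.id_coe, id_eq]
    rw [← rg.eq, TensorProduct.sum_tmul]
    simp only [map_sum]
    refine Finset.sum_congr rfl fun i hi => ?_
    simp only [LinearEquiv.coe_coe, TensorProduct.assoc_tmul, TensorProduct.map_tmul,
      LinearMap.comp_apply, LinearMap.id_coe, id_eq]
    rw [hc i hi]
    simp only [LinearMap.id_coe, id_eq, TensorProduct.sum_tmul, map_sum]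
    refine Finset.sum_congr rfl fun m _ => Finset.sum_congr rfl fun n _ => ?_
    rw [xiU_tmul, phi4_tmul]
  rw [hLHS]
  -- contract
  have hR : phi4 a w ((TensorProduct.map (Coalgebra.comul (R := k)) (Coalgebra.comul (R := k)))
      (Coalgebra.comul (R := k) g)) = Fm (Coalgebra.comul (R := k) g) := by
    conv_lhs => rw [← rg.eq, map_sum, map_sum]
    have step : ∀ i ∈ rg.index,
        phi4 a w ((TensorProduct.map (Coalgebra.comul (R := k)) (Coalgebra.comul (R := k)))
          (rg.left i ⊗ₜ[k] rg.right i)) =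
        counit (R := k) (rg.right i) • Fm (Coalgebra.comul (R := k) (rg.left i)) := by
      intro i _
      rw [TensorProduct.map_tmul, phi4_comul_comul, hFm]
    rw [Finset.sum_congr rfl step]
    conv_rhs => rw [← sum_counit_smul_right rg, map_sum, map_sum]
    exact Finset.sum_congr rfl fun i _ => by rw [map_smul, map_smul]
  rw [hR]
  -- right-hand side
  conv_lhs => rw [← rg.eq, map_sum]
  simp only [LinearMap.comp_apply, TensorProduct.map_tmul, LinearMap.id_coe, id_eq]
  rw [← rg.eq, TensorProduct.sum_tmul, map_sum, map_sum]
  refine Finset.sum_congr rfl fun i _ => ?_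
  simp [hFm]

end yd3

section yd4

variable {k : Type*} [Field k] {H : Type*} [Ring H] [HopfAlgebra k H]
  {V : Type*} [AddCommGroup V] [Module k V]

local notation "𝒮" => (antipode (R := k) (A := H))

variable {a : H →ₗ[k] V →ₗ[k] V} {δ : V →ₗ[k] H ⊗[k] V}

/-- Abbreviation for the hypothesis pack. -/
def YDhyp (a : H →ₗ[k] V →ₗ[k] V) (δ : V →ₗ[k] H ⊗[k] V) : Prop :=
  ∀ (h : H) (v : V) (n : ℕ) (g : Fin n → H) (w : Fin n → V),
      δ v = ∑ i, g i ⊗ₜ[k] w i →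
      ∀ (m : ℕ) (h₁ h₂ h₃ : Fin m → H),
        (TensorProduct.map (Coalgebra.comul (R := k)) LinearMap.id)
            (Coalgebra.comul (R := k) h) = ∑ j, (h₁ j ⊗ₜ[k] h₂ j) ⊗ₜ[k] h₃ j →
        δ (a h v) = ∑ j, ∑ i,
          (h₁ j * g i * HopfAlgebra.antipode (R := k) (h₃ j)) ⊗ₜ[k] a (h₂ j) (w i)

theorem claim3 (hyd : YDhyp a δ) (ha₁ : ∀ v : V, a 1 v = v)
    (hamul : ∀ (h h' : H) (v : V), a (h * h') v = a h (a h' v)) (h : H) (v : V) :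
    TensorProduct.lift a (TensorProduct.map 𝒮 LinearMap.id (δ (a h v))) =
      a (𝒮 (𝒮 h)) (TensorProduct.lift a (TensorProduct.map 𝒮 LinearMap.id (δ v))) := by
  rw [yd_step1 hyd]
  exact theta_core ha₁ hamul h (δ v)

theorem theta_lift (hyd : YDhyp a δ) (ha₁ : ∀ v : V, a 1 v = v)
    (hamul : ∀ (h h' : H) (v : V), a (h * h') v = a h (a h' v)) (u : H ⊗[k] V) :
    TensorProduct.lift a (TensorProduct.map 𝒮 LinearMap.id (δ (TensorProduct.lift a u))) =
      TensorProduct.lift a ((TensorProduct.map (𝒮 ∘ₗ 𝒮)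
        (TensorProduct.lift a ∘ₗ TensorProduct.map 𝒮 LinearMap.id ∘ₗ δ)) u) := by
  induction u with
  | zero => simp
  | add u₁ u₂ h₁ h₂ => simp only [map_add, h₁, h₂]
  | tmul g w =>
    rw [TensorProduct.map_tmul]
    simp only [TensorProduct.lift.tmul, LinearMap.comp_apply]
    exact claim3 hyd ha₁ hamul g w

theorem lq (hyd : YDhyp a δ) (u : H ⊗[k] V) :
    δ (TensorProduct.lift a u) =
      (xiU a ∘ₗ TensorProduct.map
        ((TensorProduct.map (Coalgebra.comul (R := k)) LinearMap.id) ∘ₗ Coalgebra.comul (R := k))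
        LinearMap.id) ((TensorProduct.map LinearMap.id δ) u) := by
  induction u with
  | zero => simp
  | add u₁ u₂ h₁ h₂ => simp only [map_add, h₁, h₂]
  | tmul g w =>
    simp only [TensorProduct.map_tmul, TensorProduct.lift.tmul, LinearMap.comp_apply,
      LinearMap.id_coe, id_eq]
    exact yd_step1 hyd g w

theorem claim4 (hyd : YDhyp a δ)
    (hδcoassoc : ∀ v : V,
      (TensorProduct.assoc k H H V)
          ((TensorProduct.map (Coalgebra.comul (R := k)) LinearMap.id) (δ v)) =
        (TensorProduct.map LinearMap.id δ) (δ v)) (v : V) :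
    δ (TensorProduct.lift a (TensorProduct.map 𝒮 LinearMap.id (δ v))) =
      (TensorProduct.map (𝒮 ∘ₗ 𝒮)
        (TensorProduct.lift a ∘ₗ TensorProduct.map 𝒮 LinearMap.id ∘ₗ δ)) (δ v) := by
  have comm1 : (TensorProduct.map (LinearMap.id (M := H)) δ) ∘ₗ
      (TensorProduct.map 𝒮 (LinearMap.id (M := V))) =
      (TensorProduct.map 𝒮 (LinearMap.id (M := H ⊗[k] V))) ∘ₗ
        (TensorProduct.map (LinearMap.id (M := H)) δ) := by
    rw [← TensorProduct.map_comp, ← TensorProduct.map_comp]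
    simp
  have split2 : (TensorProduct.map (𝒮 ∘ₗ 𝒮)
      (TensorProduct.lift a ∘ₗ TensorProduct.map 𝒮 LinearMap.id ∘ₗ δ) :
        H ⊗[k] V →ₗ[k] H ⊗[k] V) =
      (TensorProduct.map (𝒮 ∘ₗ 𝒮)
        (TensorProduct.lift a ∘ₗ TensorProduct.map 𝒮 LinearMap.id)) ∘ₗ
        (TensorProduct.map LinearMap.id δ) := by
    rw [← TensorProduct.map_comp]
    simp only [LinearMap.comp_id]
    rfl
  calc δ (TensorProduct.lift a (TensorProduct.map 𝒮 LinearMap.id (δ v)))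
      = (xiU a ∘ₗ TensorProduct.map
          ((TensorProduct.map (Coalgebra.comul (R := k)) LinearMap.id) ∘ₗ
            Coalgebra.comul (R := k)) LinearMap.id)
          ((TensorProduct.map LinearMap.id δ)
            ((TensorProduct.map 𝒮 LinearMap.id) (δ v))) := lq hyd _
    _ = (xiU a ∘ₗ TensorProduct.map
          ((TensorProduct.map (Coalgebra.comul (R := k)) LinearMap.id) ∘ₗ
            Coalgebra.comul (R := k)) LinearMap.id)
          ((TensorProduct.map 𝒮 LinearMap.id)
            ((TensorProduct.assoc k H H V)
              ((TensorProduct.map (Coalgebra.comul (R := k)) LinearMap.id) (δ v)))) := by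
        have comm1' := LinearMap.congr_fun comm1 (δ v)
        simp only [LinearMap.comp_apply] at comm1'
        rw [comm1', hδcoassoc v]
    _ = (TensorProduct.map (𝒮 ∘ₗ 𝒮)
          (TensorProduct.lift a ∘ₗ TensorProduct.map 𝒮 LinearMap.id))
          ((TensorProduct.assoc k H H V)
            ((TensorProduct.map (Coalgebra.comul (R := k)) LinearMap.id) (δ v))) := by
        have h5 := LinearMap.congr_fun (lemE (V := V) a) (δ v)
        simp only [LinearMap.comp_apply, LinearEquiv.coe_coe] at h5 ⊢
        exact h5
    _ = (TensorProduct.map (𝒮 ∘ₗ 𝒮)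
          (TensorProduct.lift a ∘ₗ TensorProduct.map 𝒮 LinearMap.id))
          ((TensorProduct.map LinearMap.id δ) (δ v)) := by rw [hδcoassoc v]
    _ = (TensorProduct.map (𝒮 ∘ₗ 𝒮)
          (TensorProduct.lift a ∘ₗ TensorProduct.map 𝒮 LinearMap.id ∘ₗ δ)) (δ v) := by
        rw [split2, LinearMap.comp_apply]

theorem lfinal (ha₁ : ∀ v : V, a 1 v = v)
    (hamul : ∀ (h h' : H) (v : V), a (h * h') v = a h (a h' v))
    (hδcoassoc : ∀ v : V,
      (TensorProduct.assoc k H H V)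
          ((TensorProduct.map (Coalgebra.comul (R := k)) LinearMap.id) (δ v)) =
        (TensorProduct.map LinearMap.id δ) (δ v))
    (hδcounit : ∀ v : V,
      (TensorProduct.lid k V)
          ((TensorProduct.map (Coalgebra.counit (R := k)) LinearMap.id) (δ v)) = v)
    (v : V) :
    TensorProduct.lift a ((TensorProduct.map LinearMap.id
      (TensorProduct.lift a ∘ₗ TensorProduct.map 𝒮 LinearMap.id ∘ₗ δ)) (δ v)) = v := by
  have hsplit : (TensorProduct.map LinearMap.id
      (TensorProduct.lift a ∘ₗ TensorProduct.map 𝒮 LinearMap.id ∘ₗ δ) :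
        H ⊗[k] V →ₗ[k] H ⊗[k] V) =
      (TensorProduct.map LinearMap.id
        (TensorProduct.lift a ∘ₗ TensorProduct.map 𝒮 LinearMap.id)) ∘ₗ
        (TensorProduct.map LinearMap.id δ) := by
    rw [← TensorProduct.map_comp]
    simp only [LinearMap.id_comp, LinearMap.comp_id]
    rfl
  have hG : ∀ (g : H) (w : V),
      TensorProduct.lift a ((TensorProduct.map LinearMap.id
        (TensorProduct.lift a ∘ₗ TensorProduct.map 𝒮 LinearMap.id))
          ((TensorProduct.assoc k H H V)
            ((TensorProduct.map (Coalgebra.comul (R := k)) LinearMap.id) (g ⊗ₜ[k] w)))) =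
      counit (R := k) g • w := by
    intro g w
    rw [TensorProduct.map_tmul, ← (ℛ k g).eq, TensorProduct.sum_tmul]
    simp only [map_sum, LinearMap.id_coe, id_eq, TensorProduct.assoc_tmul,
      TensorProduct.map_tmul, TensorProduct.lift.tmul, LinearMap.comp_apply]
    have : ∀ i ∈ (ℛ k g).index,
        a ((ℛ k g).left i) (a (𝒮 ((ℛ k g).right i)) w) =
        a ((ℛ k g).left i * 𝒮 ((ℛ k g).right i)) w := fun i _ => (hamul _ _ _).symm
    rw [Finset.sum_congr rfl this, ← LinearMap.sum_apply, ← map_sum,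
      HopfAlgebra.sum_mul_antipode_eq_smul (ℛ k g), map_smul, LinearMap.smul_apply, ha₁]
  rw [hsplit, LinearMap.comp_apply, ← hδcoassoc v]
  calc TensorProduct.lift a ((TensorProduct.map LinearMap.id
        (TensorProduct.lift a ∘ₗ TensorProduct.map 𝒮 LinearMap.id))
          ((TensorProduct.assoc k H H V)
            ((TensorProduct.map (Coalgebra.comul (R := k)) LinearMap.id) (δ v)))) =
      (TensorProduct.lid k V)
        ((TensorProduct.map (Coalgebra.counit (R := k)) LinearMap.id) (δ v)) := by
        have key : (TensorProduct.lift a ∘ₗ (TensorProduct.map LinearMap.id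
            (TensorProduct.lift a ∘ₗ TensorProduct.map 𝒮 LinearMap.id)) ∘ₗ
            (TensorProduct.assoc k H H V).toLinearMap ∘ₗ
            (TensorProduct.map (Coalgebra.comul (R := k)) LinearMap.id) :
              H ⊗[k] V →ₗ[k] V) =
            (TensorProduct.lid k V).toLinearMap ∘ₗ
              (TensorProduct.map (Coalgebra.counit (R := k)) LinearMap.id) := by
          apply TensorProduct.ext'
          intro g w
          simp only [LinearMap.comp_apply, LinearEquiv.coe_coe]
          rw [hG g w, TensorProduct.map_tmul]
          simp [TensorProduct.lid_tmul]
        have := LinearMap.congr_fun key (δ v)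
        simpa using this
    _ = v := hδcounit v

end yd4

end YDProofAux

section

variable (k : Type*) [Field k] (H : Type*) [Ring H] [HopfAlgebra k H]
  (V : Type*) [AddCommGroup V] [Module k V]

/-- **Lemma.** For a Yetter–Drinfeld module `V` over a Hopf algebra `H` with
bijective antipode `S`, the map `θ_V : v ↦ S(v₍₋₁₎)·v₍₀₎` is bijective with
inverse `v ↦ S⁻²(v₍₋₁₎)·v₍₀₎`, and satisfies `θ_V(h·v) = S²(h)·θ_V(v)` and
`δ(θ_V(v)) = S²(v₍₋₁₎) ⊗ θ_V(v₍₀₎)`. -/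
theorem ydTheta_bijective_and_twist
    (Sinv : H →ₗ[k] H)
    (hSinv₁ : ∀ h : H, Sinv (HopfAlgebra.antipode (R := k) h) = h)
    (hSinv₂ : ∀ h : H, HopfAlgebra.antipode (R := k) (Sinv h) = h)
    (a : H →ₗ[k] V →ₗ[k] V) (δ : V →ₗ[k] H ⊗[k] V)
    -- `a` is a module structure
    (ha₁ : ∀ v : V, a 1 v = v)
    (hamul : ∀ (h h' : H) (v : V), a (h * h') v = a h (a h' v))
    -- `δ` is a coassociative counital comodule structure
    (hδcoassoc : ∀ v : V,
      (TensorProduct.assoc k H H V)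
          ((TensorProduct.map (Coalgebra.comul (R := k)) LinearMap.id) (δ v)) =
        (TensorProduct.map LinearMap.id δ) (δ v))
    (hδcounit : ∀ v : V,
      (TensorProduct.lid k V)
          ((TensorProduct.map (Coalgebra.counit (R := k)) LinearMap.id) (δ v)) = v)
    -- the Yetter–Drinfeld condition `δ(h·v) = h₍₁₎ v₍₋₁₎ S(h₍₃₎) ⊗ h₍₂₎·v₍₀₎`
    (hyd : ∀ (h : H) (v : V) (n : ℕ) (g : Fin n → H) (w : Fin n → V),
      δ v = ∑ i, g i ⊗ₜ[k] w i →
      ∀ (m : ℕ) (h₁ h₂ h₃ : Fin m → H),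
        (TensorProduct.map (Coalgebra.comul (R := k)) LinearMap.id)
            (Coalgebra.comul (R := k) h) = ∑ j, (h₁ j ⊗ₜ[k] h₂ j) ⊗ₜ[k] h₃ j →
        δ (a h v) = ∑ j, ∑ i,
          (h₁ j * g i * HopfAlgebra.antipode (R := k) (h₃ j)) ⊗ₜ[k] a (h₂ j) (w i)) :
    (∀ v : V, ydTheta k H V a δ (ydThetaInv k H V Sinv a δ v) = v) ∧
    (∀ v : V, ydThetaInv k H V Sinv a δ (ydTheta k H V a δ v) = v) ∧
    (∀ (h : H) (v : V),
      ydTheta k H V a δ (a h v) =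
        a (HopfAlgebra.antipode (R := k) (HopfAlgebra.antipode (R := k) h))
          (ydTheta k H V a δ v)) ∧
    (δ ∘ₗ ydTheta k H V a δ =
      (TensorProduct.map
          ((HopfAlgebra.antipode (R := k) : H →ₗ[k] H) ∘ₗ
            (HopfAlgebra.antipode (R := k) : H →ₗ[k] H))
          (ydTheta k H V a δ)) ∘ₗ δ) := by
  have hyd' : YDProofAux.YDhyp a δ := hyd
  set S : H →ₗ[k] H := HopfAlgebra.antipode (R := k) with hS
  set θm : V →ₗ[k] V :=
    TensorProduct.lift a ∘ₗ TensorProduct.map S LinearMap.id ∘ₗ δ with hθm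
  have hθ : ydTheta k H V a δ = θm := rfl
  refine ⟨?_, ?_, ?_, ?_⟩
  · -- θ ∘ θ⁻¹ = id
    intro v
    rw [hθ, hθm]
    simp only [ydThetaInv, LinearMap.comp_apply]
    rw [YDProofAux.theta_lift hyd' ha₁ hamul
      ((TensorProduct.map (Sinv ∘ₗ Sinv) LinearMap.id) (δ v))]
    have key2 : (TensorProduct.map (S ∘ₗ S) θm) ∘ₗ
        (TensorProduct.map (Sinv ∘ₗ Sinv) (LinearMap.id (M := V))) =
        TensorProduct.map LinearMap.id θm := by
      rw [← TensorProduct.map_comp]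
      congr 1
      apply LinearMap.ext
      intro x
      simp [hSinv₂]
    have key2' := LinearMap.congr_fun key2 (δ v)
    simp only [LinearMap.comp_apply] at key2'
    rw [key2']
    exact YDProofAux.lfinal ha₁ hamul hδcoassoc hδcounit v
  · -- θ⁻¹ ∘ θ = id
    intro v
    rw [hθ, hθm]
    simp only [ydThetaInv, LinearMap.comp_apply]
    rw [YDProofAux.claim4 hyd' hδcoassoc v]
    have key : (TensorProduct.map (Sinv ∘ₗ Sinv) (LinearMap.id (M := V))) ∘ₗ
        (TensorProduct.map (S ∘ₗ S) θm) = TensorProduct.map LinearMap.id θm := by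
      rw [← TensorProduct.map_comp]
      congr 1
      apply LinearMap.ext
      intro x
      simp [hSinv₁]
    have key' := LinearMap.congr_fun key (δ v)
    simp only [LinearMap.comp_apply] at key'
    rw [key']
    exact YDProofAux.lfinal ha₁ hamul hδcoassoc hδcounit v
  · -- θ(h·v) = S²(h)·θ(v)
    intro h v
    rw [hθ, hθm]
    simp only [LinearMap.comp_apply]
    exact YDProofAux.claim3 hyd' ha₁ hamul h v
  · -- δ ∘ θ = (S² ⊗ θ) ∘ δ
    apply LinearMap.ext
    intro v
    rw [hθ, hθm]
    simp only [LinearMap.comp_apply]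
    exact YDProofAux.claim4 hyd' hδcoassoc v

end
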